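/- arXiv:0905.1731 — 3 statements merged into one kernel-verified Lean document; each statement's English description precedes it below -/
import Mathlib

section
/- Let G be an abelian group and H a finitely generated subgroup of G such that the quotient group G ⧸ H is torsion-free. If Φ : G ≃+ G is a group automorphism with Φ(H) ⊆ H, then Φ(H) = H; in particular, Φ restricts to an automorphism of H. -/
/-- Let `G` be an abelian group and `H` a finitely generated subgroup of `G`
such that `G ⧸ H` is torsion-free.  If `Φ : G ≃+ G` is a group automorphism with
`Φ(H) ⊆ H`, then `Φ(H) = H`; in particular `Φ` restricts to an automorphism of `H`. -/
theorem stmt1 (G : Type*) [AddCommGroup G] (H : AddSubgroup G) (hfg : H.FG)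
    (htf : ∀ g : G ⧸ H, g ≠ 0 → ¬IsOfFinAddOrder g)
    (Φ : G ≃+ G) (hΦ : AddSubgroup.map Φ.toAddMonoidHom H ≤ H) :
    AddSubgroup.map Φ.toAddMonoidHom H = H ∧
      ∃ ψ : H ≃+ H, ∀ x : H, (ψ x : G) = Φ (x : G) := by
  -- the restriction of Φ to H, as an ℤ-linear endomorphism of H
  have hmem : ∀ x : H, Φ (x : G) ∈ H := fun x => hΦ ⟨x, x.2, rfl⟩
  set φ₀ : H →+ H :=
    { toFun := fun x => ⟨Φ (x : G), hmem x⟩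
      map_zero' := by ext; simp
      map_add' := fun a b => by ext; simp } with hφ₀
  have hinj : Function.Injective φ₀ := by
    intro a b hab
    have : Φ (a : G) = Φ (b : G) := congrArg Subtype.val hab
    exact Subtype.ext (Φ.injective this)
  set φ : H →ₗ[ℤ] H := φ₀.toIntLinearMap with hφ
  have hfinH : Module.Finite ℤ H :=
    Module.Finite.iff_addGroup_fg.mpr ((AddGroup.fg_iff_addSubgroup_fg H).mpr hfg)
  -- the quotient H ⧸ range φ has rank zero
  have hrank : Module.rank ℤ (H ⧸ LinearMap.range φ) = 0 := by
    have h1 : Module.rank ℤ (H ⧸ LinearMap.range φ) + Module.rank ℤ (LinearMap.range φ)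
        ≤ Module.rank ℤ H := rank_quotient_add_rank_le _
    have h2 : Module.rank ℤ H = Module.rank ℤ (LinearMap.range φ) :=
      (LinearEquiv.ofInjective φ hinj).rank_eq
    have hlt : Module.rank ℤ H < Cardinal.aleph0 := Module.rank_lt_aleph0 ℤ H
    rw [← h2] at h1
    obtain ⟨n, hn⟩ := Cardinal.lt_aleph0.mp hlt
    have hle : Module.rank ℤ (H ⧸ LinearMap.range φ) ≤ Module.rank ℤ H :=
      le_trans (le_add_right le_rfl) (by rwa [add_comm] at h1)
    obtain ⟨m, hm⟩ := Cardinal.lt_aleph0.mp (lt_of_le_of_lt hle hlt)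
    rw [hm, hn, ← Nat.cast_add, Nat.cast_le] at h1
    rw [hm]
    norm_cast
    omega
  -- so every element of H has a nonzero multiple in the range of φ
  have htor : ∀ x : H, ∃ n : ℤ, n ≠ 0 ∧ n • x ∈ LinearMap.range φ := by
    intro x
    obtain ⟨n, hn, hnx⟩ := rank_eq_zero_iff.mp hrank (Submodule.Quotient.mk x)
    refine ⟨n, hn, ?_⟩
    rwa [← Submodule.Quotient.mk_smul, Submodule.Quotient.mk_eq_zero] at hnx
  -- Φ(H) = H
  have hmap : AddSubgroup.map Φ.toAddMonoidHom H = H := by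
    refine le_antisymm hΦ ?_
    intro h hh
    obtain ⟨n, hn, ⟨y, hy⟩⟩ := htor ⟨h, hh⟩
    -- n • h = Φ y
    have hy' : Φ (y : G) = n • h := by
      have := congrArg Subtype.val hy
      simpa [hφ, hφ₀] using this
    set g : G := Φ.symm h with hg
    have hng : n • g = (y : G) := by
      apply Φ.injective
      rw [map_zsmul, hg, Φ.apply_symm_apply, ← hy']
    have hgH : g ∈ H := by
      have hq : n • (QuotientAddGroup.mk g : G ⧸ H) = 0 := by
        rw [← QuotientAddGroup.mk_zsmul, hng, QuotientAddGroup.eq_zero_iff]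
        exact y.2
      by_contra hgH
      have hne : (QuotientAddGroup.mk g : G ⧸ H) ≠ 0 := by
        rwa [ne_eq, QuotientAddGroup.eq_zero_iff]
      exact htf _ hne (isOfFinAddOrder_iff_zsmul_eq_zero.mpr ⟨n, hn, hq⟩)
    exact ⟨g, hgH, by simp [hg]⟩
  refine ⟨hmap, ?_⟩
  -- construct the automorphism of H
  have hsurj : Function.Surjective φ₀ := by
    intro y
    obtain ⟨g, hgH, hgy⟩ := hmap.ge y.2
    exact ⟨⟨g, hgH⟩, Subtype.ext hgy⟩
  exact ⟨AddEquiv.ofBijective φ₀ ⟨hinj, hsurj⟩, fun x => rfl⟩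
end

section
/- Let n ≥ 1 and let K = ℤ × (ZMod n → ℤ), a free abelian group modeling the K-group of the n-gon (the first coordinate records the class of a point, the remaining n coordinates the classes of the components of the normalization). Define the automorphism σ : K ≃+ K by σ(a, f) = (a, i ↦ f(i − 1)) (cyclically permuting the last n coordinates and fixing the first), and the additive homomorphism Z : K → ℂ by Z(a, f) = −a + i·(Σ_{j ∈ ZMod n} f(j)). If Φ : K ≃+ K is a group automorphism such that Φ ∘ σ = σ^q ∘ Φ for some natural number q, then Φ maps ker Z into ker Z. -/
/-- Let `n ≥ 1` and `K = ℤ × (ZMod n → ℤ)` (modeling the K-group of the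
n-gon).  Let `σ` be the automorphism `σ (a, f) = (a, i ↦ f (i - 1))` (cyclically
permuting the last `n` coordinates), and let `Z : K →+ ℂ` be
`Z (a, f) = -a + i · (∑ j, f j)`.  If `Φ : K ≃+ K` is a group automorphism with
`Φ ∘ σ = σ^q ∘ Φ` for some natural number `q`, then `Φ` maps `ker Z` into `ker Z`. -/
theorem stmt2 (n : ℕ) [NeZero n]
    (σ : (ℤ × (ZMod n → ℤ)) ≃+ (ℤ × (ZMod n → ℤ)))
    (hσ : ∀ (a : ℤ) (f : ZMod n → ℤ), σ (a, f) = (a, fun i => f (i - 1)))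
    (Z : (ℤ × (ZMod n → ℤ)) →+ ℂ)
    (hZ : ∀ (a : ℤ) (f : ZMod n → ℤ),
      Z (a, f) = -(a : ℂ) + Complex.I * (∑ j : ZMod n, (f j : ℂ)))
    (Φ : (ℤ × (ZMod n → ℤ)) ≃+ (ℤ × (ZMod n → ℤ))) (q : ℕ)
    (hΦσ : ∀ x, Φ (σ x) = (⇑σ)^[q] (Φ x)) :
    ∀ x ∈ Z.ker, Φ x ∈ Z.ker := by
  -- iterate formula for σ
  have hiter : ∀ (m : ℕ) (b : ℤ) (g : ZMod n → ℤ),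
      (⇑σ)^[m] (b, g) = (b, fun i => g (i - (m : ZMod n))) := by
    intro m
    induction m with
    | zero => intro b g; simp
    | succ m ih =>
      intro b g
      rw [Function.iterate_succ_apply, hσ, ih]
      refine Prod.ext rfl ?_
      funext i
      push_cast
      ring_nf
  -- Φ on iterates
  have hΦiter : ∀ (k : ℕ) (x : ℤ × (ZMod n → ℤ)),
      Φ ((⇑σ)^[k] x) = (⇑σ)^[q * k] (Φ x) := by
    intro k
    induction k with
    | zero => intro x; simp
    | succ k ih =>
      intro x
      rw [Function.iterate_succ_apply, ih, hΦσ, ← Function.iterate_add_apply,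
        Nat.mul_succ]
  intro x hx
  obtain ⟨a, f⟩ := x
  -- extract a = 0 and ∑ f = 0
  rw [AddMonoidHom.mem_ker, hZ] at hx
  have hsum : (∑ j : ZMod n, (f j : ℂ)) = ((∑ j : ZMod n, f j : ℤ) : ℂ) := by push_cast; rfl
  rw [hsum] at hx
  have ha : a = 0 := by
    have := congrArg Complex.re hx
    simp [Complex.add_re, Complex.mul_re] at this
    exact_mod_cast this
  have hf : (∑ j : ZMod n, f j) = 0 := by
    have := congrArg Complex.im hx
    simp [Complex.add_im, Complex.mul_im] at this
    exact_mod_cast this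
  -- the key sum vanishes
  have hT : (∑ k : ZMod n, (⇑σ)^[k.val] (a, f)) = 0 := by
    refine Prod.ext ?_ ?_
    · simp only [Prod.fst_sum, hiter, ha, Finset.sum_const, smul_zero, Prod.fst_zero]
    · funext i
      simp only [Prod.snd_sum, hiter]
      rw [Finset.sum_apply]
      have : ∀ k : ZMod n, f (i - (k.val : ZMod n)) = f (i - k) := by
        intro k; rw [ZMod.natCast_val, ZMod.cast_id]
      calc (∑ k : ZMod n, f (i - (k.val : ZMod n)))
          = ∑ k : ZMod n, f (i - k) := Finset.sum_congr rfl (fun k _ => this k)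
        _ = ∑ j : ZMod n, f j := Fintype.sum_equiv (Equiv.subLeft i) _ _ (fun k => rfl)
        _ = 0 := hf
  -- apply Φ
  have hT2 : (∑ k : ZMod n, (⇑σ)^[q * k.val] (Φ (a, f))) = 0 := by
    calc (∑ k : ZMod n, (⇑σ)^[q * k.val] (Φ (a, f)))
        = ∑ k : ZMod n, Φ ((⇑σ)^[k.val] (a, f)) := by
          refine Finset.sum_congr rfl fun k _ => ?_
          rw [hΦiter]
      _ = Φ (∑ k : ZMod n, (⇑σ)^[k.val] (a, f)) := (map_sum Φ _ _).symm
      _ = 0 := by rw [hT, map_zero]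
  set b := (Φ (a, f)).1 with hb
  set g := (Φ (a, f)).2 with hg
  have hΦx : Φ (a, f) = (b, g) := rfl
  rw [hΦx] at hT2
  simp only [hiter] at hT2
  have hb0 : b = 0 := by
    have h1 := congrArg Prod.fst hT2
    simp only [Prod.fst_sum, Finset.sum_const, Finset.card_univ, ZMod.card,
      smul_eq_mul] at h1
    have hn : (n : ℤ) ≠ 0 := by exact_mod_cast (NeZero.ne n)
    have : (n : ℤ) * b = 0 := h1
    exact (mul_eq_zero.mp this).resolve_left hn
  have hg0 : (∑ j : ZMod n, g j) = 0 := by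
    have h2 := congrArg Prod.snd hT2
    have h3 : ∀ i : ZMod n, (∑ k : ZMod n, g (i - ((q * k.val : ℕ) : ZMod n))) = 0 := by
      intro i
      have := congrFun h2 i
      simpa [Prod.snd_sum, Finset.sum_apply] using this
    have h4 : (∑ i : ZMod n, ∑ k : ZMod n, g (i - ((q * k.val : ℕ) : ZMod n))) = 0 := by
      exact Finset.sum_eq_zero (fun i _ => h3 i)
    rw [Finset.sum_comm] at h4
    have h5 : ∀ k : ZMod n, (∑ i : ZMod n, g (i - ((q * k.val : ℕ) : ZMod n)))
        = ∑ j : ZMod n, g j := fun k =>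
      Fintype.sum_equiv (Equiv.subRight ((q * k.val : ℕ) : ZMod n)) _ _ (fun i => rfl)
    rw [Finset.sum_congr rfl (fun k _ => h5 k), Finset.sum_const, Finset.card_univ,
      ZMod.card, nsmul_eq_mul] at h4
    have hn : (n : ℤ) ≠ 0 := by exact_mod_cast (NeZero.ne n)
    exact (mul_eq_zero.mp h4).resolve_left hn
  rw [AddMonoidHom.mem_ker, hΦx, hZ]
  have : (∑ j : ZMod n, (g j : ℂ)) = ((∑ j : ZMod n, g j : ℤ) : ℂ) := by push_cast; rfl
  rw [this, hb0, hg0]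
  simp
end

section
/- Let n ≥ 1 and let a, b be coprime integers. Set d = gcd(n, b) (a positive integer, with the convention gcd(n, 0) = n). Then there exist γ ∈ Γ₀(n) and an integer c with gcd(c, d) = 1 such that the matrix-vector product of γ with the column vector (a, b) equals the column vector (c, d). -/
/-- Arithmetic progression coprimality: if `x` and `y` are coprime integers, then for any
positive natural modulus `m` there is `k` with `gcd (x + k*y, m) = 1`. -/
lemma exists_gcd_add_mul_eq_one (x y : ℤ) (m : ℕ) (hm : m ≠ 0) (h : IsCoprime x y) :
    ∃ k : ℤ, Int.gcd (x + k * y) m = 1 := by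
  rcases eq_or_ne y 0 with rfl | hy
  · have hux : IsUnit x := isCoprime_zero_right.mp h
    rcases Int.isUnit_iff.mp hux with rfl | rfl
    · exact ⟨0, by simp⟩
    · exact ⟨0, by simp [Int.gcd]⟩
  · set Y := y.natAbs with hYdef
    have hYnz : Y ≠ 0 := Int.natAbs_ne_zero.mpr hy
    haveI : NeZero (Y * m) := ⟨Nat.mul_ne_zero hYnz hm⟩
    obtain ⟨u, v, huv⟩ := h
    have hy0 : ((y : ℤ) : ZMod Y) = 0 :=
      (ZMod.intCast_zmod_eq_zero_iff_dvd y Y).mpr (Int.natAbs_dvd.mpr dvd_rfl)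
    have h1 : ((u * x + v * y : ℤ) : ZMod Y) = 1 := by rw [huv]; simp
    push_cast at h1
    rw [hy0, mul_zero, add_zero] at h1
    have hxunit : IsUnit ((x : ℤ) : ZMod Y) :=
      IsUnit.of_mul_eq_one _ (by rw [mul_comm]; exact h1)
    obtain ⟨w, hw⟩ := ZMod.unitsMap_surjective (Nat.dvd_mul_right Y m) hxunit.unit
    set z : ℕ := (w : ZMod (Y * m)).val with hzdef
    have hz : Nat.Coprime z (Y * m) := ZMod.val_coe_unit_coprime w
    have hcastw : (ZMod.castHom (Nat.dvd_mul_right Y m) (ZMod Y)) (w : ZMod (Y * m))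
        = ((x : ℤ) : ZMod Y) := by
      have := congrArg (Units.val) hw
      simp only [ZMod.unitsMap_def, Units.coe_map, MonoidHom.coe_coe] at this
      rw [this, IsUnit.unit_spec]
    have hzx : ((z : ℤ) : ZMod Y) = ((x : ℤ) : ZMod Y) := by
      rw [← hcastw]
      simp [hzdef, ZMod.natCast_val]
    have hdvd : (Y : ℤ) ∣ ((z : ℤ) - x) := by
      rw [← ZMod.intCast_zmod_eq_zero_iff_dvd]
      push_cast
      rw [sub_eq_zero]
      exact_mod_cast hzx
    obtain ⟨t, ht⟩ := hdvd
    have hgoal : Int.gcd (z : ℤ) (m : ℤ) = 1 := by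
      rw [Int.gcd_natCast_natCast]
      exact Nat.Coprime.coprime_dvd_right (Nat.dvd_mul_left m Y) hz
    rcases Int.natAbs_eq y with hcase | hcase
    · refine ⟨t, ?_⟩
      have hxy : x + t * y = (z : ℤ) := by rw [hcase, ← hYdef]; linarith [ht]
      rw [hxy]; exact hgoal
    · refine ⟨-t, ?_⟩
      have hxy : x + (-t) * y = (z : ℤ) := by rw [hcase, ← hYdef]; linarith [ht]
      rw [hxy]; exact hgoal

/-- Let `n ≥ 1` and `a, b` coprime integers.  Set `d = gcd (n, b)` (a
positive integer).  Then there exist `γ ∈ Γ₀(n)` and an integer `c` with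
`gcd (c, d) = 1` such that the matrix-vector product of `γ` with `(a, b)` equals
`(c, d)`. -/
theorem stmt6 (n : ℕ) (hn : 1 ≤ n) (a b : ℤ) (hab : Int.gcd a b = 1) :
    ∃ γ ∈ CongruenceSubgroup.Gamma0 n, ∃ c : ℤ,
      Int.gcd c (Int.gcd (n : ℤ) b) = 1 ∧
      (γ : Matrix (Fin 2) (Fin 2) ℤ) 0 0 * a + (γ : Matrix (Fin 2) (Fin 2) ℤ) 0 1 * b = c ∧
      (γ : Matrix (Fin 2) (Fin 2) ℤ) 1 0 * a + (γ : Matrix (Fin 2) (Fin 2) ℤ) 1 1 * b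
        = (Int.gcd (n : ℤ) b : ℤ) := by
  set d : ℕ := Int.gcd (n : ℤ) b with hddef
  have hnz : (n : ℤ) ≠ 0 := by exact_mod_cast Nat.one_le_iff_ne_zero.mp hn
  have hd0 : 0 < d := Int.gcd_pos_of_ne_zero_left b hnz
  obtain ⟨n', hn'⟩ : (d : ℤ) ∣ (n : ℤ) := Int.gcd_dvd_left _ _
  obtain ⟨b', hb'⟩ : (d : ℤ) ∣ b := Int.gcd_dvd_right _ _
  have hcop : Int.gcd n' b' = 1 := by
    have h2 : d = d * Int.gcd n' b' := by
      conv_lhs => rw [hddef, hn', hb', Int.gcd_mul_left]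
      simp
    exact ((Nat.mul_eq_left hd0.ne').mp h2.symm)
  -- coprimality of b' with n' * a
  have hICab : IsCoprime a b := Int.isCoprime_iff_gcd_eq_one.mpr hab
  have hICb'a : IsCoprime b' a :=
    IsCoprime.of_isCoprime_of_dvd_left hICab.symm ⟨(d : ℤ), by rw [hb']; ring⟩
  have hICb'n' : IsCoprime b' n' := (Int.isCoprime_iff_gcd_eq_one.mpr hcop).symm
  have hICmain : IsCoprime b' (n' * a) := hICb'n'.mul_right hICb'a
  obtain ⟨p, q, hpq⟩ := hICmain
  have hICp : IsCoprime p (n' * a) := ⟨b', q, by linear_combination hpq⟩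
  obtain ⟨k, hk⟩ := exists_gcd_add_mul_eq_one p (n' * a) d hd0.ne' hICp
  set s : ℤ := p + k * (n' * a) with hsdef
  set u : ℤ := q - k * b' with hudef
  have hkey : n' * a * u + b' * s = 1 := by rw [hsdef, hudef]; linear_combination hpq
  -- bottom row equation
  have hbot : (n : ℤ) * u * a + s * b = (d : ℤ) := by
    rw [hn', hb']; linear_combination (d : ℤ) * hkey
  -- coprimality of the bottom row
  have hIC1 : IsCoprime (n' * u) s := ⟨a, b', by linear_combination hkey⟩
  have hIC2 : IsCoprime ((d : ℤ)) s := (Int.isCoprime_iff_gcd_eq_one.mpr hk).symm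
  have hICrow : IsCoprime ((n : ℤ) * u) s := by
    rw [hn', mul_assoc]; exact hIC2.mul_left hIC1
  obtain ⟨P, Q, hPQ⟩ := hICrow.symm
  -- build the matrix
  have hdet : Matrix.det !![P, -Q; (n : ℤ) * u, s] = 1 := by
    rw [Matrix.det_fin_two_of]; linear_combination hPQ
  set γ : Matrix.SpecialLinearGroup (Fin 2) ℤ := ⟨!![P, -Q; (n : ℤ) * u, s], hdet⟩ with hγdef
  have hγ00 : (γ : Matrix (Fin 2) (Fin 2) ℤ) 0 0 = P := rfl
  have hγ01 : (γ : Matrix (Fin 2) (Fin 2) ℤ) 0 1 = -Q := rfl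
  have hγ10 : (γ : Matrix (Fin 2) (Fin 2) ℤ) 1 0 = (n : ℤ) * u := rfl
  have hγ11 : (γ : Matrix (Fin 2) (Fin 2) ℤ) 1 1 = s := rfl
  have hmem : γ ∈ CongruenceSubgroup.Gamma0 n := by
    rw [CongruenceSubgroup.Gamma0_mem, hγ10]
    push_cast
    simp
  refine ⟨γ, hmem, P * a + (-Q) * b, ?_, by rw [hγ00, hγ01], by rw [hγ10, hγ11]; exact hbot⟩
  -- gcd (c, d) = 1
  set c : ℤ := P * a + (-Q) * b with hcdef
  set g : ℕ := Int.gcd c (d : ℤ) with hgdef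
  have hg1 : (g : ℤ) ∣ c := Int.gcd_dvd_left _ _
  have hg2 : (g : ℤ) ∣ (d : ℤ) := Int.gcd_dvd_right _ _
  have ha2 : a = s * c + Q * (d : ℤ) := by
    rw [hcdef, ← hbot]; linear_combination (-a) * hPQ
  have hb2 : b = -((n : ℤ) * u) * c + P * (d : ℤ) := by
    rw [hcdef, ← hbot]; linear_combination (-b) * hPQ
  have hga : (g : ℤ) ∣ a := by rw [ha2]; exact dvd_add (hg1.mul_left s) (hg2.mul_left Q)
  have hgb : (g : ℤ) ∣ b := by rw [hb2]; exact dvd_add (hg1.mul_left _) (hg2.mul_left P)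
  have : (g : ℤ) ∣ ((Int.gcd a b : ℕ) : ℤ) := Int.natCast_dvd_natCast.mpr (Int.dvd_gcd hga hgb)
  rw [hab] at this
  exact Nat.dvd_one.mp (Int.natCast_dvd_natCast.mp this)
end
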